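/- Let n ≥ 1, z ∈ ℂ∖ℝ, and let π₁, π₂ be Hermitian projections of ℂⁿ with orthogonal ranges, i.e. π₂·π₁ = 0. Then τ := π₁ + π₂ is a Hermitian projection, and for every λ ∈ ℂ∖{z}: g_{z,π₂}(λ)·g_{z,π₁}(λ) = ((λ − conj(z))/(λ − z)) · g_{z,τ}(λ). -/

import Mathlib

open Matrix Complex Filter

noncomputable section

/-- A Hermitian projection of ℂⁿ: a matrix with π* = π and π² = π. -/
def IsHermitianProj {n : ℕ} (π : Matrix (Fin n) (Fin n) ℂ) : Prop :=
  πᴴ = π ∧ π * π = π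

/-- The simple element g_{z,π}(λ) = I + ((z - conj z)/(λ - z))·(I - π). -/
def simpleElt {n : ℕ} (z : ℂ) (π : Matrix (Fin n) (Fin n) ℂ) (lam : ℂ) :
    Matrix (Fin n) (Fin n) ℂ :=
  1 + ((z - (starRingEnd ℂ) z) / (lam - z)) • (1 - π)

/-- The range of the linear map ℂⁿ → ℂⁿ defined by a matrix. -/
def mrange {n m : ℕ} (A : Matrix (Fin n) (Fin m) ℂ) :
    Submodule ℂ (EuclideanSpace ℂ (Fin n)) :=
  LinearMap.range (Matrix.toEuclideanLin A)

/-- If π₁, π₂ are Hermitian projections with orthogonal ranges (π₂·π₁ = 0), then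
τ = π₁ + π₂ is a Hermitian projection and
g_{z,π₂}(λ)·g_{z,π₁}(λ) = ((λ − conj z)/(λ − z)) · g_{z,τ}(λ) for λ ≠ z. -/
theorem statement3 {n : ℕ} (hn : 1 ≤ n) (z : ℂ) (hz : z.im ≠ 0)
    (π₁ π₂ : Matrix (Fin n) (Fin n) ℂ)
    (hπ₁ : IsHermitianProj π₁) (hπ₂ : IsHermitianProj π₂)
    (horth : π₂ * π₁ = 0) :
    IsHermitianProj (π₁ + π₂) ∧
    ∀ lam : ℂ, lam ≠ z →
      simpleElt z π₂ lam * simpleElt z π₁ lam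
        = ((lam - (starRingEnd ℂ) z) / (lam - z)) • simpleElt z (π₁ + π₂) lam := by
  obtain ⟨h1h, h1p⟩ := hπ₁
  obtain ⟨h2h, h2p⟩ := hπ₂
  have h12 : π₁ * π₂ = 0 := by
    have := congrArg Matrix.conjTranspose horth
    simpa [Matrix.conjTranspose_mul, h1h, h2h] using this
  constructor
  · refine ⟨by simp [Matrix.conjTranspose_add, h1h, h2h], ?_⟩
    rw [add_mul, mul_add, mul_add, h1p, h2p, h12, horth]
    abel
  · intro lam hlam
    have hne : lam - z ≠ 0 := sub_ne_zero.mpr hlam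
    set c : ℂ := (z - (starRingEnd ℂ) z) / (lam - z) with hc
    have hcoef : (lam - (starRingEnd ℂ) z) / (lam - z) = 1 + c := by
      rw [hc, one_add_div hne]
      congr 1
      ring
    rw [hcoef]
    simp only [simpleElt, ← hc]
    have hprod : (1 - π₂) * (1 - π₁) = 1 - π₁ - π₂ := by
      rw [sub_mul, mul_sub, mul_sub, horth]
      simp [sub_sub]
    rw [add_mul, mul_add, mul_add, smul_mul_smul_comm, hprod]
    simp only [one_mul, mul_one]
    have h : (1 : Matrix (Fin n) (Fin n) ℂ) - (π₁ + π₂) = (1 - π₁ - π₂) := by abel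
    rw [h]
    match_scalars <;> ring
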